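/- arXiv:1702.01553 — 2 statements merged into one kernel-verified Lean document; each statement's English description precedes it below -/
import Mathlib

section
/- Suppose H : Ω × ℝⁿ × ℝ^{mn} → ℝ is K-Lipschitz in its last argument: |H(t,x,p) - H(t,x,v)| ≤ K‖p - v‖. Let Q be a linear map with operator norm K whose adjoint attains its norm in every direction (e.g. Q = K·Id when the domains match). Define L(t,x,u,v) = H(t,x,v) - ⟨Qu, v⟩, U the closed unit ball, V the closed ball of radius P. Then for all (t,x) and all p with ‖p‖ ≤ P: H(t,x,p) = max over v ∈ V of min over u ∈ U of (⟨Qu, p⟩ + L(t,x,u,v)). -/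
open Metric RealInnerProductSpace

/-- Lemma 6.1: max-min representation of a Lipschitz Hamiltonian.
`H` is `K`-Lipschitz in its last variable, `Q` is a linear map of norm `K` whose
adjoint attains its norm in every direction, `L t x u v = H t x v - ⟪Q u, v⟫`,
`U` is the closed unit ball and `V` the closed ball of radius `P`.  Then for
`‖p‖ ≤ P`, `H t x p = max_{v ∈ V} min_{u ∈ U} (⟪Q u, p⟫ + L t x u v)`. -/
theorem maxmin_representation_lipschitz_hamiltonian {m n N : ℕ}
    (Ω : Set (EuclideanSpace ℝ (Fin m)))
    (H : EuclideanSpace ℝ (Fin m) → EuclideanSpace ℝ (Fin n) →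
      EuclideanSpace ℝ (Fin N) → ℝ)
    (K P : ℝ) (hP : 0 < P)
    (hLip : ∀ t ∈ Ω, ∀ (x : EuclideanSpace ℝ (Fin n))
      (p v : EuclideanSpace ℝ (Fin N)), |H t x p - H t x v| ≤ K * ‖p - v‖)
    (Q : EuclideanSpace ℝ (Fin N) →L[ℝ] EuclideanSpace ℝ (Fin N))
    (hQ : ‖Q‖ = K)
    (hQadj : ∀ w : EuclideanSpace ℝ (Fin N),
      ‖ContinuousLinearMap.adjoint Q w‖ = K * ‖w‖)
    (L : EuclideanSpace ℝ (Fin m) → EuclideanSpace ℝ (Fin n) →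
      EuclideanSpace ℝ (Fin N) → EuclideanSpace ℝ (Fin N) → ℝ)
    (hL : ∀ t x u v, L t x u v = H t x v - ⟪Q u, v⟫) :
    ∀ t ∈ Ω, ∀ (x : EuclideanSpace ℝ (Fin n)) (p : EuclideanSpace ℝ (Fin N)),
      ‖p‖ ≤ P →
      IsGreatest {y : ℝ | ∃ v ∈ closedBall (0 : EuclideanSpace ℝ (Fin N)) P,
        IsLeast {z : ℝ | ∃ u ∈ closedBall (0 : EuclideanSpace ℝ (Fin N)) 1,
          z = ⟪Q u, p⟫ + L t x u v} y} (H t x p) := by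

  intro t ht x p hp
  -- key: there exists u in unit ball with ⟪Q u, w⟫ = -(K * ‖w‖)
  have key : ∀ w : EuclideanSpace ℝ (Fin N), ∃ u ∈ closedBall (0 : EuclideanSpace ℝ (Fin N)) 1,
      ⟪Q u, w⟫ = -(K * ‖w‖) := by
    intro w
    set a := ContinuousLinearMap.adjoint Q w with ha
    by_cases h0 : a = 0
    · refine ⟨0, by simp, ?_⟩
      have : K * ‖w‖ = 0 := by rw [← hQadj w, ← ha, h0, norm_zero]
      simp [this]
    · refine ⟨-(‖a‖⁻¹ • a), ?_, ?_⟩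
      · simp [mem_closedBall, dist_eq_norm, norm_smul, abs_inv, abs_norm,
          inv_mul_cancel₀ (norm_ne_zero_iff.mpr h0)]
      · have : ⟪Q (-(‖a‖⁻¹ • a)), w⟫ = ⟪-(‖a‖⁻¹ • a), a⟫ := by
          rw [ha, ContinuousLinearMap.adjoint_inner_right]
        rw [this, inner_neg_left, inner_smul_left]
        rw [real_inner_self_eq_norm_sq]
        have hne : ‖a‖ ≠ 0 := norm_ne_zero_iff.mpr h0
        have hKw : K * ‖w‖ ≠ 0 := by rw [← hQadj w, ← ha]; exact hne
        have hKne : K ≠ 0 := fun h => hKw (by simp [h])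
        have hwne : ‖w‖ ≠ 0 := fun h => hKw (by simp [h])
        simp only [RCLike.star_def, starRingEnd_apply, star_trivial]
        field_simp
        rw [show ‖a‖ = K * ‖w‖ from hQadj w]
  have hK : 0 ≤ K := hQ ▸ norm_nonneg Q
  constructor
  · -- membership: v = p gives least value H t x p
    refine ⟨p, by simpa [mem_closedBall, dist_eq_norm] using hp, ?_⟩
    constructor
    · exact ⟨0, by simp, by simp [hL]⟩
    · rintro z ⟨u, hu, rfl⟩
      rw [hL]; ring_nf; exact le_refl _
  · -- upper bound
    rintro y ⟨v, hv, hley⟩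
    obtain ⟨u₀, hu₀, hu₀w⟩ := key (p - v)
    have hmem : (⟪Q u₀, p⟫ + L t x u₀ v) = H t x v - K * ‖p - v‖ := by
      rw [hL]
      have : ⟪Q u₀, p⟫ - ⟪Q u₀, v⟫ = ⟪Q u₀, p - v⟫ := (inner_sub_right _ _ _).symm
      have h2 : ⟪Q u₀, p⟫ - ⟪Q u₀, v⟫ = -(K * ‖p - v‖) := this.trans hu₀w
      linarith
    have h3 : y ≤ H t x v - K * ‖p - v‖ := hmem ▸ hley.2 ⟨u₀, hu₀, rfl⟩
    have h4 : H t x v - H t x p ≤ K * ‖p - v‖ := by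
      have := hLip t ht x p v
      rw [abs_sub_comm] at this
      exact (abs_le.mp this).2
    linarith
end

section
/- Let H : Ω × ℝⁿ × ℝ^{mn} → ℝ be Lipschitz in p with constant K and positively homogeneous in p: H(t,x,λp) = λ H(t,x,p) for all λ ≥ 0. Then there exist compact sets U ⊆ ℝ^{2n'}, V ⊆ ℝ^{2mn'} (for suitable n') and bounded functions X : Ω × ℝⁿ × U × V → ℝ^{mn} such that H(t,x,p) = max over v ∈ V of min over u ∈ U of ⟨X(t,x,u,v), p⟩ for all t, x, p. -/
open RealInnerProductSpace

namespace MaxMinAux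

def emb {k k' : ℕ} (h : k ≤ k') (x : EuclideanSpace ℝ (Fin k)) : EuclideanSpace ℝ (Fin k') :=
  WithLp.toLp 2 (fun j => if hj : j.1 < k then x ⟨j.1, hj⟩ else 0)

def prj {k k' : ℕ} (h : k ≤ k') (w : EuclideanSpace ℝ (Fin k')) : EuclideanSpace ℝ (Fin k) :=
  WithLp.toLp 2 (fun i => w ⟨i.1, lt_of_lt_of_le i.2 h⟩)

lemma prj_emb {k k' : ℕ} (h : k ≤ k') (x : EuclideanSpace ℝ (Fin k)) : prj h (emb h x) = x := by
  ext i
  simp [prj, emb, i.2]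

lemma prj_zero {k k' : ℕ} (h : k ≤ k') : prj h (0 : EuclideanSpace ℝ (Fin k')) = 0 := by
  ext i
  rfl

lemma norm_emb {k k' : ℕ} (h : k ≤ k') (x : EuclideanSpace ℝ (Fin k)) : ‖emb h x‖ = ‖x‖ := by
  rw [EuclideanSpace.norm_eq, EuclideanSpace.norm_eq]
  congr 1
  rw [show (Finset.univ : Finset (Fin k')).sum (fun j => ‖emb h x j‖ ^ 2)
      = (Finset.univ.map (Fin.castLEEmb h)).sum (fun j => ‖emb h x j‖ ^ 2) from
    (Finset.sum_subset (Finset.subset_univ _) ?_).symm]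
  · rw [Finset.sum_map]
    apply Finset.sum_congr rfl
    intro i _
    have hi : ((Fin.castLEEmb h) i).1 < k := by simpa using i.2
    simp [emb, Fin.castLEEmb, hi]
  · intro j _ hj
    have : ¬ j.1 < k := by
      intro hlt
      exact hj (Finset.mem_map.mpr ⟨⟨j.1, hlt⟩, Finset.mem_univ _, by simp [Fin.castLEEmb]⟩)
    simp [emb, this]


variable {F : Type*} [NormedAddCommGroup F] [InnerProductSpace ℝ F]

lemma inner_expand (α M : ℝ) (q a p : F) :
    ⟪α • q + M • a, p⟫ = α * ⟪q, p⟫ + M * ⟪a, p⟫ := by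
  rw [inner_add_left, real_inner_smul_left, real_inner_smul_left]

lemma orth1 (q p : F) (hq : q = 0 ∨ ‖q‖ = 1) : ⟪p - ⟪q, p⟫ • q, q⟫ = 0 := by
  rcases hq with h | h
  · simp [h]
  · rw [inner_sub_left, real_inner_smul_left, real_inner_self_eq_norm_sq, h]
    rw [real_inner_comm]
    ring

lemma orth2 (q p : F) (hq : q = 0 ∨ ‖q‖ = 1) :
    ⟪-(‖p - ⟪q, p⟫ • q‖⁻¹ • (p - ⟪q, p⟫ • q)), p⟫ = -‖p - ⟪q, p⟫ • q‖ := by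
  set Pp := p - ⟪q, p⟫ • q with hP
  have hPpp : ⟪Pp, p⟫ = ‖Pp‖ ^ 2 := by
    have hdec : p = Pp + ⟪q, p⟫ • q := by rw [hP]; abel
    calc ⟪Pp, p⟫ = ⟪Pp, Pp + ⟪q, p⟫ • q⟫ := by rw [← hdec]
      _ = ‖Pp‖ ^ 2 + ⟪q, p⟫ * ⟪Pp, q⟫ := by
          rw [inner_add_right, real_inner_self_eq_norm_sq, real_inner_smul_right]
      _ = ‖Pp‖ ^ 2 := by rw [hP, orth1 q p hq]; ring
  rw [inner_neg_left, real_inner_smul_left, hPpp]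
  by_cases hPz : Pp = 0
  · simp [hPz]
  · have : ‖Pp‖ ≠ 0 := norm_ne_zero_iff.mpr hPz
    field_simp

lemma orth3 (q p : F) (hq : q = 0 ∨ ‖q‖ = 1) :
    ⟪q, -(‖p - ⟪q, p⟫ • q‖⁻¹ • (p - ⟪q, p⟫ • q))⟫ = 0 := by
  rw [inner_neg_right, real_inner_smul_right]
  have := orth1 q p hq
  rw [real_inner_comm] at this
  rw [this]
  ring

lemma val_at_dir (p a : F) (hp : p ≠ 0) (h M s : ℝ) :
    ⟪(h + M * s - M * ⟪‖p‖⁻¹ • p, a⟫) • (‖p‖⁻¹ • p) + M • a, p⟫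
      = h * ‖p‖ + M * s * ‖p‖ := by
  have hn : ‖p‖ ≠ 0 := norm_ne_zero_iff.mpr hp
  rw [inner_expand, real_inner_smul_left, real_inner_smul_left,
    real_inner_self_eq_norm_sq, real_inner_comm a p]
  field_simp
  ring

lemma main_ineq (q p : F) (hq : q = 0 ∨ ‖q‖ = 1) (K K' : ℝ) (hKK' : K ≤ K') (hK'0 : 0 ≤ K')
    (Hq Hp : ℝ) (hHp : |Hp| ≤ K' * ‖p‖) (hHq : |Hq| ≤ K' * ‖q‖)
    (hlipc : ∀ c : ℝ, 0 ≤ c → |Hp - c * Hq| ≤ K * ‖p - c • q‖) :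
    Hq * ⟪q, p⟫ + (2 * K') * (if ⟪q, p⟫ < 0 then (1:ℝ) else 0) * ⟪q, p⟫
      - (2 * K') * ‖p - ⟪q, p⟫ • q‖ ≤ Hp := by
  set c : ℝ := ⟪q, p⟫ with hc
  set Pp := p - c • q with hP
  rw [abs_le] at hHp hHq
  rcases hq with h | h
  · have hc0 : c = 0 := by rw [hc, h]; simp
    have hPp : Pp = p := by rw [hP, hc0]; simp
    rw [hc0, hPp]
    have h2 : -(K' * ‖p‖) ≤ Hp := hHp.1
    nlinarith [norm_nonneg p]
  · rw [h, mul_one] at hHq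
    by_cases hcneg : c < 0
    · rw [if_pos hcneg]
      have hple : ‖p‖ ≤ ‖Pp‖ - c := by
        have hdec : p = Pp + c • q := by rw [hP]; abel
        calc ‖p‖ = ‖Pp + c • q‖ := by rw [← hdec]
          _ ≤ ‖Pp‖ + ‖c • q‖ := norm_add_le _ _
          _ = ‖Pp‖ + |c| * ‖q‖ := by rw [norm_smul, Real.norm_eq_abs]
          _ = ‖Pp‖ - c := by rw [h, abs_of_neg hcneg]; ring
      have hHqc : Hq * c ≤ -K' * c := by nlinarith [hHq.1]
      nlinarith [norm_nonneg Pp, hHp.1, mul_le_mul_of_nonneg_left hple hK'0]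
    · rw [if_neg hcneg]
      push_neg at hcneg
      have hlip := hlipc c hcneg
      rw [abs_le] at hlip
      have h1 : c * Hq - K * ‖Pp‖ ≤ Hp := by
        have := hlip.1
        rw [← hP] at this
        linarith
      have hKM : K * ‖Pp‖ ≤ (2 * K') * ‖Pp‖ := by nlinarith [norm_nonneg Pp]
      nlinarith

end MaxMinAux

open MaxMinAux

/-- Lemma 6.2: a positively homogeneous, Lipschitz (in `p`) Hamiltonian
admits a max-min representation `H t x p = max_{v ∈ V} min_{u ∈ U} ⟪X t x u v, p⟫`
with compact control sets `U ⊆ ℝ^{2n'}`, `V ⊆ ℝ^{2mn'}` and bounded vector fields `X`. -/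
theorem maxmin_representation_homogeneous {m n : ℕ}
    (Ω : Set (EuclideanSpace ℝ (Fin m)))
    (H : EuclideanSpace ℝ (Fin m) → EuclideanSpace ℝ (Fin n) →
      EuclideanSpace ℝ (Fin (m * n)) → ℝ)
    (K : ℝ)
    (hLip : ∀ t ∈ Ω, ∀ (x : EuclideanSpace ℝ (Fin n))
      (p q : EuclideanSpace ℝ (Fin (m * n))), |H t x p - H t x q| ≤ K * ‖p - q‖)
    (hHom : ∀ t ∈ Ω, ∀ (x : EuclideanSpace ℝ (Fin n))
      (p : EuclideanSpace ℝ (Fin (m * n))) (lam : ℝ), 0 ≤ lam →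
        H t x (lam • p) = lam * H t x p) :
    ∃ (n' : ℕ) (U : Set (EuclideanSpace ℝ (Fin (2 * n'))))
      (V : Set (EuclideanSpace ℝ (Fin (2 * (m * n')))))
      (X : EuclideanSpace ℝ (Fin m) → EuclideanSpace ℝ (Fin n) →
        EuclideanSpace ℝ (Fin (2 * n')) → EuclideanSpace ℝ (Fin (2 * (m * n'))) →
        EuclideanSpace ℝ (Fin (m * n))) (A : ℝ),
      IsCompact U ∧ IsCompact V ∧ U.Nonempty ∧ V.Nonempty ∧
      (∀ t x u v, ‖X t x u v‖ ≤ A) ∧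
      (∀ t ∈ Ω, ∀ (x : EuclideanSpace ℝ (Fin n))
        (p : EuclideanSpace ℝ (Fin (m * n))),
        IsGreatest {y : ℝ | ∃ v ∈ V,
          IsLeast {z : ℝ | ∃ u ∈ U, z = ⟪X t x u v, p⟫} y} (H t x p)) := by
  classical
  set K' : ℝ := max K 0 with hK'def
  have hK'0 : (0:ℝ) ≤ K' := le_max_right _ _
  have hKK' : K ≤ K' := le_max_left _ _
  set M : ℝ := 2 * K' with hMdef
  have hM0 : (0:ℝ) ≤ M := by positivity
  have hle1 : m * n ≤ 2 * (m * n + 1) := by omega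
  have hle2 : m * n ≤ 2 * (m * (m * n + 1)) := by
    rcases Nat.eq_zero_or_pos m with hm | hm
    · simp [hm]
    · calc m * n ≤ m * (m * n + 1) := Nat.mul_le_mul_left m (by nlinarith)
        _ ≤ 2 * (m * (m * n + 1)) := Nat.le_mul_of_pos_left _ (by norm_num)
  have hdlt : m * n < 2 * (m * n + 1) := by omega
  let dIdx : Fin (2 * (m * n + 1)) := ⟨m * n, hdlt⟩
  have hH0 : ∀ t ∈ Ω, ∀ x, H t x 0 = 0 := by
    intro t ht x
    have h := hHom t ht x 0 0 le_rfl
    simpa using h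
  have hbound : ∀ t ∈ Ω, ∀ x p, |H t x p| ≤ K' * ‖p‖ := by
    intro t ht x p
    have h := hLip t ht x p 0
    rw [hH0 t ht x] at h
    simp only [sub_zero] at h
    calc |H t x p| ≤ K * ‖p‖ := h
      _ ≤ K' * ‖p‖ := mul_le_mul_of_nonneg_right hKK' (norm_nonneg _)
  let qhat : EuclideanSpace ℝ (Fin (2 * (m * (m * n + 1)))) → EuclideanSpace ℝ (Fin (m * n)) :=
    fun v => ‖prj hle2 v‖⁻¹ • prj hle2 v
  let aa : EuclideanSpace ℝ (Fin (2 * (m * n + 1))) → EuclideanSpace ℝ (Fin (m * n)) :=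
    fun u => (max 1 ‖prj hle1 u‖)⁻¹ • prj hle1 u
  let ss : EuclideanSpace ℝ (Fin (2 * (m * n + 1))) → ℝ := fun u => min 1 (max 0 (u dIdx))
  let hcl : EuclideanSpace ℝ (Fin m) → EuclideanSpace ℝ (Fin n) →
      EuclideanSpace ℝ (Fin (2 * (m * (m * n + 1)))) → ℝ :=
    fun t x v => max (-K') (min K' (H t x (qhat v)))
  let X : EuclideanSpace ℝ (Fin m) → EuclideanSpace ℝ (Fin n) →
      EuclideanSpace ℝ (Fin (2 * (m * n + 1))) →
      EuclideanSpace ℝ (Fin (2 * (m * (m * n + 1)))) → EuclideanSpace ℝ (Fin (m * n)) :=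
    fun t x u v => (hcl t x v + M * ss u - M * ⟪qhat v, aa u⟫) • qhat v + M • aa u
  have hXdef : ∀ t x u v, X t x u v
      = (hcl t x v + M * ss u - M * ⟪qhat v, aa u⟫) • qhat v + M • aa u := fun _ _ _ _ => rfl
  have hqhat : ∀ v, qhat v = 0 ∨ ‖qhat v‖ = 1 := by
    intro v
    by_cases h : prj hle2 v = 0
    · left; simp [qhat, h]
    · right; exact norm_smul_inv_norm h
  have hqle : ∀ v, ‖qhat v‖ ≤ 1 := by
    intro v
    rcases hqhat v with h | h
    · simp [h]
    · simp [h]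
  have haale : ∀ u, ‖aa u‖ ≤ 1 := by
    intro u
    have h1 : (0:ℝ) < max 1 ‖prj hle1 u‖ := lt_of_lt_of_le one_pos (le_max_left _ _)
    have h2 : ‖aa u‖ = (max 1 ‖prj hle1 u‖)⁻¹ * ‖prj hle1 u‖ := by
      simp only [aa, norm_smul, Real.norm_eq_abs]
      rw [abs_of_nonneg (inv_nonneg.mpr h1.le)]
    rw [h2]
    calc (max 1 ‖prj hle1 u‖)⁻¹ * ‖prj hle1 u‖
        ≤ (max 1 ‖prj hle1 u‖)⁻¹ * (max 1 ‖prj hle1 u‖) :=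
          mul_le_mul_of_nonneg_left (le_max_right _ _) (inv_nonneg.mpr h1.le)
      _ = 1 := inv_mul_cancel₀ h1.ne'
  have hss0 : ∀ u, 0 ≤ ss u := fun u => le_min zero_le_one (le_max_left _ _)
  have hss1 : ∀ u, ss u ≤ 1 := fun u => min_le_left _ _
  have hclle : ∀ t x v, |hcl t x v| ≤ K' := by
    intro t x v
    rw [abs_le]
    exact ⟨le_max_left _ _, max_le (by linarith) (min_le_left _ _)⟩
  have hcleq : ∀ t ∈ Ω, ∀ x v, hcl t x v = H t x (qhat v) := by
    intro t ht x v
    have hb : |H t x (qhat v)| ≤ K' := by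
      calc |H t x (qhat v)| ≤ K' * ‖qhat v‖ := hbound t ht x _
        _ ≤ K' * 1 := mul_le_mul_of_nonneg_left (hqle v) hK'0
        _ = K' := mul_one _
    rw [abs_le] at hb
    simp only [hcl]
    rw [min_eq_right hb.2, max_eq_right hb.1]
  refine ⟨m * n + 1, Metric.closedBall 0 2, Metric.closedBall 0 1, X, 7 * K',
    isCompact_closedBall _ _, isCompact_closedBall _ _,
    ⟨0, Metric.mem_closedBall_self (by norm_num)⟩,
    ⟨0, Metric.mem_closedBall_self (by norm_num)⟩, ?_, ?_⟩
  · -- boundedness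
    intro t x u v
    rw [hXdef]
    have h2 : |⟪qhat v, aa u⟫| ≤ 1 := by
      calc |⟪qhat v, aa u⟫| ≤ ‖qhat v‖ * ‖aa u‖ := abs_real_inner_le_norm _ _
        _ ≤ 1 * 1 := mul_le_mul (hqle v) (haale u) (norm_nonneg _) zero_le_one
        _ = 1 := one_mul _
    have h3 : |hcl t x v + M * ss u - M * ⟪qhat v, aa u⟫| ≤ K' + M + M := by
      have h4 : |M * ss u| ≤ M := by
        rw [abs_mul, abs_of_nonneg hM0, abs_of_nonneg (hss0 u)]
        nlinarith [hss1 u, hss0 u]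
      have h5 : |M * ⟪qhat v, aa u⟫| ≤ M := by
        rw [abs_mul, abs_of_nonneg hM0]
        nlinarith [abs_nonneg (⟪qhat v, aa u⟫ : ℝ)]
      calc |hcl t x v + M * ss u - M * ⟪qhat v, aa u⟫|
          ≤ |hcl t x v + M * ss u| + |M * ⟪qhat v, aa u⟫| := abs_sub _ _
        _ ≤ |hcl t x v| + |M * ss u| + |M * ⟪qhat v, aa u⟫| := by
            have := abs_add_le (hcl t x v) (M * ss u)
            linarith
        _ ≤ K' + M + M := by
            have := hclle t x v
            linarith
    calc ‖(hcl t x v + M * ss u - M * ⟪qhat v, aa u⟫) • qhat v + M • aa u‖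
        ≤ ‖(hcl t x v + M * ss u - M * ⟪qhat v, aa u⟫) • qhat v‖ + ‖M • aa u‖ :=
          norm_add_le _ _
      _ ≤ (K' + M + M) * 1 + M * 1 := by
          have e1 : ‖(hcl t x v + M * ss u - M * ⟪qhat v, aa u⟫) • qhat v‖
              = |hcl t x v + M * ss u - M * ⟪qhat v, aa u⟫| * ‖qhat v‖ := by
            rw [norm_smul (hcl t x v + M * ss u - M * ⟪qhat v, aa u⟫) (qhat v),
              Real.norm_eq_abs]
          have e2 : ‖M • aa u‖ = |M| * ‖aa u‖ := by
            rw [norm_smul M (aa u), Real.norm_eq_abs]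
          rw [e1, e2, abs_of_nonneg hM0]
          have b1 : |hcl t x v + M * ss u - M * ⟪qhat v, aa u⟫| * ‖qhat v‖
              ≤ (K' + M + M) * 1 :=
            mul_le_mul h3 (hqle v) (norm_nonneg _) (le_trans (abs_nonneg _) h3)
          have b2 : M * ‖aa u‖ ≤ M * 1 :=
            mul_le_mul_of_nonneg_left (haale u) hM0
          linarith
      _ = 7 * K' := by rw [hMdef]; ring
  · -- representation
    intro t ht x p
    constructor
    · -- membership
      by_cases hp : p = 0
      · subst hp
        refine ⟨0, Metric.mem_closedBall_self (by norm_num), ?_, ?_⟩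
        · exact ⟨0, Metric.mem_closedBall_self (by norm_num), by
            rw [hH0 t ht x, inner_zero_right]⟩
        · rintro z ⟨u, hu, rfl⟩
          rw [hH0 t ht x, inner_zero_right]
      · set pn : EuclideanSpace ℝ (Fin (m * n)) := ‖p‖⁻¹ • p with hpndef
        have hpn1 : ‖pn‖ = 1 := norm_smul_inv_norm hp
        have hvmem : emb hle2 pn ∈ Metric.closedBall (0 : EuclideanSpace ℝ
            (Fin (2 * (m * (m * n + 1))))) 1 := by
          rw [Metric.mem_closedBall, dist_zero_right, norm_emb, hpn1]
        have hqv : qhat (emb hle2 pn) = pn := by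
          show ‖prj hle2 (emb hle2 pn)‖⁻¹ • prj hle2 (emb hle2 pn) = pn
          rw [prj_emb, hpn1, inv_one, one_smul]
        have hvalv : ∀ u, ⟪X t x u (emb hle2 pn), p⟫ = H t x pn * ‖p‖ + M * ss u * ‖p‖ := by
          intro u
          rw [hXdef, hcleq t ht x, hqv, hpndef]
          exact val_at_dir p (aa u) hp _ M (ss u)
        have hHpn : H t x pn * ‖p‖ = H t x p := by
          have hsm : (‖p‖ : ℝ) • pn = p := by
            rw [hpndef, smul_smul, mul_inv_cancel₀ (norm_ne_zero_iff.mpr hp), one_smul]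
          rw [← hsm, hHom t ht x pn ‖p‖ (norm_nonneg p), hsm]
          ring
        refine ⟨emb hle2 pn, hvmem, ?_, ?_⟩
        · refine ⟨0, Metric.mem_closedBall_self (by norm_num), ?_⟩
          rw [hvalv 0]
          have hssz : ss (0 : EuclideanSpace ℝ (Fin (2 * (m * n + 1)))) = 0 := by
            simp only [ss]
            norm_num
          rw [hssz, hHpn]
          ring
        · rintro z ⟨u, hu, rfl⟩
          rw [hvalv u, hHpn]
          nlinarith [mul_nonneg (mul_nonneg hM0 (hss0 u)) (norm_nonneg p)]
    · -- upper bound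
      rintro y ⟨v, hv, hyl⟩
      have hq := hqhat v
      set q := qhat v with hqdef
      set c : ℝ := ⟪q, p⟫ with hcdef
      set w : EuclideanSpace ℝ (Fin (m * n)) := -(‖p - c • q‖⁻¹ • (p - c • q)) with hwdef
      have hwle : ‖w‖ ≤ 1 := by
        rw [hwdef, norm_neg]
        by_cases hP : p - c • q = 0
        · simp [hP]
        · exact le_of_eq (norm_smul_inv_norm hP)
      set sstar : ℝ := if c < 0 then (1:ℝ) else 0 with hsdef
      set ustar := emb hle1 w + sstar • EuclideanSpace.single dIdx (1:ℝ) with hudef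
      have humem : ustar ∈ Metric.closedBall (0 : EuclideanSpace ℝ
          (Fin (2 * (m * n + 1)))) 2 := by
        rw [Metric.mem_closedBall, dist_zero_right, hudef]
        have habs : |sstar| ≤ 1 := by rw [hsdef]; split_ifs <;> norm_num
        calc ‖emb hle1 w + sstar • EuclideanSpace.single dIdx (1:ℝ)‖
            ≤ ‖emb hle1 w‖ + ‖sstar • EuclideanSpace.single dIdx (1:ℝ)‖ := norm_add_le _ _
          _ ≤ 1 + 1 := by
              rw [norm_emb, norm_smul, EuclideanSpace.norm_single, norm_one, mul_one]
              exact add_le_add hwle (by rw [Real.norm_eq_abs]; exact habs)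
          _ = 2 := by norm_num
      have hprju : prj hle1 ustar = w := by
        ext i
        have hi : i.1 < m * n := i.2
        have hne : (⟨i.1, lt_of_lt_of_le i.2 hle1⟩ : Fin (2 * (m * n + 1))) ≠ dIdx := by
          intro hcon
          have h' := congrArg Fin.val hcon
          simp only [dIdx] at h'
          omega
        simp only [prj, hudef, PiLp.add_apply, PiLp.smul_apply, emb,
          EuclideanSpace.single_apply, hi, dif_pos, if_neg hne, smul_eq_mul, mul_zero,
          add_zero, Fin.eta]
      have haau : aa ustar = w := by
        show (max 1 ‖prj hle1 ustar‖)⁻¹ • prj hle1 ustar = w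
        rw [hprju, max_eq_left hwle, inv_one, one_smul]
      have hssu : ss ustar = sstar := by
        have hnotlt : ¬ (m * n < m * n) := lt_irrefl _
        have hd : ustar dIdx = sstar := by
          simp only [hudef, PiLp.add_apply, PiLp.smul_apply, emb,
            EuclideanSpace.single_apply, dif_neg hnotlt, if_pos rfl, smul_eq_mul,
            mul_one, zero_add]
          simp
          exact fun h' => absurd h' hnotlt
        show min 1 (max 0 (ustar dIdx)) = sstar
        rw [hd, hsdef]
        split_ifs <;> norm_num
      have hvalu : ⟪X t x ustar v, p⟫ = H t x q * c + M * sstar * c - M * ‖p - c • q‖ := by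
        rw [hXdef, hcleq t ht x, haau, hssu, ← hqdef, inner_expand, ← hcdef]
        have h1 : ⟪q, w⟫ = (0:ℝ) := by rw [hwdef, hcdef]; exact orth3 q p hq
        have h2 : ⟪w, p⟫ = -‖p - c • q‖ := by rw [hwdef, hcdef]; exact orth2 q p hq
        rw [h1, h2]
        ring
      have hy1 : y ≤ ⟪X t x ustar v, p⟫ := hyl.2 ⟨ustar, humem, rfl⟩
      have hy2 : H t x q * c + M * sstar * c - M * ‖p - c • q‖ ≤ H t x p := by
        have key := main_ineq q p hq K K' hKK' hK'0 (H t x q) (H t x p)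
          (hbound t ht x p) (hbound t ht x q) ?_
        · rw [← hcdef, ← hsdef, ← hMdef] at key
          exact key
        · intro lam hlam
          have hcq : H t x (lam • q) = lam * H t x q := hHom t ht x q lam hlam
          have := hLip t ht x p (lam • q)
          rw [hcq] at this
          exact this
      linarith [hvalu ▸ hy1]
end
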